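/- Let Δ₁, Δ₂ ⊂ ℝⁿ be compact convex bodies. Then vol(Δ₁ + Δ₂)^{1/n} ≥ vol(Δ₁)^{1/n} + vol(Δ₂)^{1/n} (Brunn–Minkowski), where Δ₁ + Δ₂ is the Minkowski sum. Consequently, if two big line bundles L₁, L₂ on a projective variety have Okounkov bodies satisfying Δ_v(L₁) + Δ_v(L₂) ⊆ Δ_v(L₁+L₂), then Vol(L₁+L₂)^{1/n} ≥ Vol(L₁)^{1/n} + Vol(L₂)^{1/n}. -/

import Mathlib

open MeasureTheory Pointwise Set Filter
open scoped ENNReal NNReal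

section BrunnMinkowskiAux
lemma vadd_subset_sumset {X Y : Set ℝ} {x₀ : ℝ} (hx₀ : x₀ ∈ X) : x₀ +ᵥ Y ⊆ X + Y := by
  rintro _ ⟨y, hy, rfl⟩
  exact ⟨x₀, hx₀, y, hy, rfl⟩

lemma compact_sumset {K L : Set ℝ} (hK : IsCompact K) (hL : IsCompact L)
    (hKne : K.Nonempty) (hLne : L.Nonempty) :
    volume K + volume L ≤ volume (K + L) := by
  set a := sSup K with ha_def
  set b := sInf L with hb_def
  have ha : a ∈ K := hK.sSup_mem hKne
  have hb : b ∈ L := hL.sInf_mem hLne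
  set A : Set ℝ := b +ᵥ K with hA_def
  set B : Set ℝ := a +ᵥ L with hB_def
  have hAsub : A ⊆ K + L := by
    rintro _ ⟨k, hk, rfl⟩
    exact ⟨k, hk, b, hb, by simp [vadd_eq_add]; ring⟩
  have hBsub : B ⊆ K + L := by
    rintro _ ⟨l, hl, rfl⟩
    exact ⟨a, ha, l, hl, by simp [vadd_eq_add]⟩
  have hABinter : A ∩ B ⊆ {b + a} := by
    rintro x ⟨⟨k, hk, rfl⟩, ⟨l, hl, hxl⟩⟩
    have hk' : k ≤ a := le_csSup hK.bddAbove hk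
    have hl' : b ≤ l := csInf_le hL.bddBelow hl
    simp only [vadd_eq_add] at hxl ⊢
    have : b + k = a + l := hxl.symm
    have h1 : b + k ≤ b + a := by linarith
    have h2 : b + a ≤ b + k := by linarith
    simp [le_antisymm h1 h2]
  have hBmeas : MeasurableSet B := (hL.vadd a).measurableSet
  calc volume K + volume L = volume A + volume B := by
        rw [hA_def, hB_def, measure_vadd, measure_vadd]
    _ = volume (A ∪ B) + volume (A ∩ B) := (measure_union_add_inter A hBmeas).symm
    _ ≤ volume (K + L) + volume {b + a} := by
        exact add_le_add (measure_mono (union_subset hAsub hBsub)) (measure_mono hABinter)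
    _ = volume (K + L) := by simp

lemma sumset_one_dim {X Y S : Set ℝ} (hX : MeasurableSet X) (hY : MeasurableSet Y)
    (hXne : X.Nonempty) (hYne : Y.Nonempty) (hsub : X + Y ⊆ S) :
    volume X + volume Y ≤ volume S := by
  by_contra hcon
  push_neg at hcon
  obtain ⟨x₀, hx₀⟩ := hXne
  obtain ⟨y₀, hy₀⟩ := hYne
  have hXS : volume X ≤ volume S := by
    calc volume X = volume (y₀ +ᵥ X) := (measure_vadd volume y₀ X).symm
      _ ≤ volume (Y + X) := measure_mono (vadd_subset_sumset hy₀)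
      _ = volume (X + Y) := by rw [add_comm]
      _ ≤ volume S := measure_mono hsub
  have hYS : volume Y ≤ volume S := by
    calc volume Y = volume (x₀ +ᵥ Y) := (measure_vadd volume x₀ Y).symm
      _ ≤ volume (X + Y) := measure_mono (vadd_subset_sumset hx₀)
      _ ≤ volume S := measure_mono hsub
  have hX0 : volume X ≠ 0 := by
    intro h; rw [h, zero_add] at hcon; exact absurd hYS (not_le.2 hcon)
  have hY0 : volume Y ≠ 0 := by
    intro h; rw [h, add_zero] at hcon; exact absurd hXS (not_le.2 hcon)
  obtain ⟨r₁, hr₁, r₂, hr₂, hr⟩ := ENNReal.exists_lt_add_of_lt_add hcon hX0 hY0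
  obtain ⟨K, hKX, hKc, hKr⟩ := hX.exists_lt_isCompact hr₁
  obtain ⟨L, hLY, hLc, hLr⟩ := hY.exists_lt_isCompact hr₂
  have hKc' : IsCompact (K ∪ {x₀}) := hKc.union isCompact_singleton
  have hLc' : IsCompact (L ∪ {y₀}) := hLc.union isCompact_singleton
  have key := compact_sumset hKc' hLc' (by simp) (by simp)
  have hsub2 : (K ∪ {x₀}) + (L ∪ {y₀}) ⊆ S := by
    rintro _ ⟨k, hk, l, hl, rfl⟩
    refine hsub ⟨k, ?_, l, ?_, rfl⟩
    · rcases hk with h | h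
      · exact hKX h
      · simp at h; exact h ▸ hx₀
    · rcases hl with h | h
      · exact hLY h
      · simp at h; exact h ▸ hy₀
  have : volume S < volume S :=
    lt_of_lt_of_le hr <| by
      calc r₁ + r₂ ≤ volume K + volume L := add_le_add hKr.le hLr.le
        _ ≤ volume (K ∪ {x₀}) + volume (L ∪ {y₀}) := by
            gcongr <;> exact subset_union_left
        _ ≤ volume ((K ∪ {x₀}) + (L ∪ {y₀})) := key
        _ ≤ volume S := measure_mono hsub2
  exact lt_irrefl _ this

lemma layercake_le_one {f : ℝ → ℝ≥0∞} (hf : Measurable f) (hle : ∀ x, f x ≤ 1) :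
    ∫⁻ x, f x = ∫⁻ t in Ioi (0:ℝ), volume {x | ENNReal.ofReal t < f x} := by
  have hfin : ∀ x, f x ≠ ⊤ := fun x => ((hle x).trans_lt ENNReal.one_lt_top).ne
  have h1 : ∀ x, ENNReal.ofReal ((f x).toReal) = f x := fun x => ENNReal.ofReal_toReal (hfin x)
  have h2 : (0:ℝ → ℝ) ≤ᶠ[ae volume] fun x => (f x).toReal :=
    Filter.Eventually.of_forall fun x => ENNReal.toReal_nonneg
  have h3 : AEMeasurable (fun x => (f x).toReal) volume :=
    (ENNReal.measurable_toReal.comp hf).aemeasurable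
  calc ∫⁻ x, f x = ∫⁻ x, ENNReal.ofReal ((f x).toReal) := by simp_rw [h1]
    _ = ∫⁻ t in Ioi (0:ℝ), volume {a | t < (f a).toReal} :=
        lintegral_eq_lintegral_meas_lt volume h2 h3
    _ = ∫⁻ t in Ioi (0:ℝ), volume {x | ENNReal.ofReal t < f x} := by
        refine setLIntegral_congr_fun measurableSet_Ioi ?_
        intro t ht
        dsimp only
        congr 1
        ext a
        simp only [mem_setOf_eq]
        rw [ENNReal.ofReal_lt_iff_lt_toReal (le_of_lt ht) (hfin a)]

lemma ennreal_am_gm {θ : ℝ} (hθ0 : 0 < θ) (hθ1 : θ < 1) (a b : ℝ≥0∞) :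
    a ^ (1 - θ) * b ^ θ ≤ ENNReal.ofReal (1 - θ) * a + ENNReal.ofReal θ * b := by
  have h1θ : (0:ℝ) < 1 - θ := by linarith
  induction a using ENNReal.recTopCoe with
  | top =>
      rcases eq_or_ne b 0 with rfl | hb
      · rw [ENNReal.zero_rpow_of_pos hθ0, mul_zero]; exact zero_le
      · have : ENNReal.ofReal (1 - θ) * ⊤ = ⊤ := by
          rw [ENNReal.mul_top]; simp [ENNReal.ofReal_eq_zero]; linarith
        rw [this, top_add]; exact le_top
  | coe a =>
      induction b using ENNReal.recTopCoe with
      | top =>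
          have : ENNReal.ofReal θ * ⊤ = ⊤ := by
            rw [ENNReal.mul_top]; simp [ENNReal.ofReal_eq_zero]; linarith
        
          calc (↑a : ℝ≥0∞) ^ (1-θ) * ⊤ ^ θ ≤ ⊤ := le_top
            _ = ENNReal.ofReal (1-θ) * ↑a + ENNReal.ofReal θ * ⊤ := by rw [this, add_top]
      | coe b =>
          have hsum : Real.toNNReal (1-θ) + Real.toNNReal θ = 1 := by
            ext
            push_cast [Real.coe_toNNReal _ h1θ.le, Real.coe_toNNReal _ hθ0.le]
            ring
          have key := NNReal.geom_mean_le_arith_mean2_weighted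
            (Real.toNNReal (1-θ)) (Real.toNNReal θ) a b hsum
          have e1 : ((Real.toNNReal (1-θ) : NNReal) : ℝ) = 1 - θ := Real.coe_toNNReal _ h1θ.le
          have e2 : ((Real.toNNReal θ : NNReal) : ℝ) = θ := Real.coe_toNNReal _ hθ0.le
          rw [e1, e2] at key
          calc (↑a : ℝ≥0∞) ^ (1-θ) * (↑b : ℝ≥0∞) ^ θ
              = ↑(a ^ (1-θ) * b ^ θ) := by
                rw [ENNReal.coe_mul, ENNReal.coe_rpow_of_nonneg _ h1θ.le,
                  ENNReal.coe_rpow_of_nonneg _ hθ0.le]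
            _ ≤ ↑(Real.toNNReal (1-θ) * a + Real.toNNReal θ * b) := ENNReal.coe_le_coe.2 key
            _ = ENNReal.ofReal (1-θ) * ↑a + ENNReal.ofReal θ * ↑b := by
                push_cast
                rfl

lemma pl_dim1_core {θ : ℝ} (hθ0 : 0 < θ) (hθ1 : θ < 1) {f g h : ℝ → ℝ≥0∞}
    (hf : Measurable f) (hg : Measurable g) (hh : Measurable h)
    (hf1 : ∀ x, f x ≤ 1) (hg1 : ∀ x, g x ≤ 1) (hh1 : ∀ x, h x ≤ 1)
    (hfsup : essSup f volume = 1) (hgsup : essSup g volume = 1)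
    (hyp : ∀ x y, f x ^ (1-θ) * g y ^ θ ≤ h ((1-θ) * x + θ * y)) :
    ENNReal.ofReal (1-θ) * (∫⁻ x, f x) + ENNReal.ofReal θ * (∫⁻ x, g x) ≤ ∫⁻ x, h x := by
  rw [layercake_le_one hf hf1, layercake_le_one hg hg1, layercake_le_one hh hh1]
  have h1θ : (0:ℝ) < 1 - θ := by linarith
  set Mf : ℝ → ℝ≥0∞ := fun t => volume {x | ENNReal.ofReal t < f x} with hMf_def
  set Mg : ℝ → ℝ≥0∞ := fun t => volume {x | ENNReal.ofReal t < g x} with hMg_def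
  set Mh : ℝ → ℝ≥0∞ := fun t => volume {x | ENNReal.ofReal t < h x} with hMh_def
  have hanti : ∀ (u : ℝ → ℝ≥0∞), Antitone (fun t => volume {x | ENNReal.ofReal t < u x}) := by
    intro u t₁ t₂ h12
    exact measure_mono fun x hx => lt_of_le_of_lt (ENNReal.ofReal_le_ofReal h12) hx
  have hMf_meas : Measurable Mf := (hanti f).measurable
  have hMg_meas : Measurable Mg := (hanti g).measurable
  -- the key pointwise bound
  have key : ∀ t ∈ Ioi (0:ℝ),
      ENNReal.ofReal (1-θ) * Mf t + ENNReal.ofReal θ * Mg t ≤ Mh t := by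
    intro t ht
    simp only [mem_Ioi] at ht
    by_cases hlt : t < 1
    · set s := ENNReal.ofReal t with hs_def
      have hs0 : s ≠ 0 := by simp [hs_def, ENNReal.ofReal_eq_zero]; linarith
      have hstop : s ≠ ⊤ := ENNReal.ofReal_ne_top
      have hs1 : s < 1 := ENNReal.ofReal_lt_one.2 hlt
      have hfset : MeasurableSet {x | s < f x} := measurableSet_lt measurable_const hf
      have hgset : MeasurableSet {x | s < g x} := measurableSet_lt measurable_const hg
      have hfpos : volume {x | s < f x} ≠ 0 := by
        intro h0
        have : essSup f volume ≤ s := by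
          rw [essSup_eq_sInf]
          exact sInf_le h0
        rw [hfsup] at this
        exact absurd (lt_of_le_of_lt this hs1) (lt_irrefl _)
      have hgpos : volume {x | s < g x} ≠ 0 := by
        intro h0
        have : essSup g volume ≤ s := by
          rw [essSup_eq_sInf]
          exact sInf_le h0
        rw [hgsup] at this
        exact absurd (lt_of_le_of_lt this hs1) (lt_irrefl _)
      have hsub : (1-θ) • {x | s < f x} + θ • {x | s < g x} ⊆ {x | s < h x} := by
        rintro _ ⟨_, ⟨x, hx, rfl⟩, _, ⟨y, hy, rfl⟩, rfl⟩
        simp only [mem_setOf_eq] at hx hy ⊢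
        have h1 : s ^ (1-θ) * s ^ θ < f x ^ (1-θ) * g y ^ θ :=
          ENNReal.mul_lt_mul (ENNReal.rpow_lt_rpow hx h1θ) (ENNReal.rpow_lt_rpow hy hθ0)
        have h2 : s ^ (1-θ) * s ^ θ = s := by
          rw [← ENNReal.rpow_add _ _ hs0 hstop]
          norm_num
        calc s = s ^ (1-θ) * s ^ θ := h2.symm
          _ < f x ^ (1-θ) * g y ^ θ := h1
          _ ≤ h ((1-θ) * x + θ * y) := hyp x y
          _ = h ((1-θ) • x + θ • y) := by norm_num [smul_eq_mul]
      have hXmeas : MeasurableSet ((1-θ) • {x | s < f x}) := hfset.const_smul₀ (1-θ)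
      have hYmeas : MeasurableSet (θ • {x | s < g x}) := hgset.const_smul₀ θ
      have hXne : ((1-θ) • {x | s < f x}).Nonempty :=
        (nonempty_of_measure_ne_zero hfpos).smul_set
      have hYne : (θ • {x | s < g x}).Nonempty :=
        (nonempty_of_measure_ne_zero hgpos).smul_set
      have hsum := sumset_one_dim hXmeas hYmeas hXne hYne hsub
      have e1 : volume ((1-θ) • {x | s < f x}) = ENNReal.ofReal (1-θ) * Mf t := by
        rw [Measure.addHaar_smul]
        congr 2
        simp [abs_of_pos h1θ]
      have e2 : volume (θ • {x | s < g x}) = ENNReal.ofReal θ * Mg t := by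
        rw [Measure.addHaar_smul]
        congr 2
        simp [abs_of_pos hθ0]
      rw [e1, e2] at hsum
      exact hsum
    · -- t ≥ 1 : Mf t = 0, Mg t = 0
      push_neg at hlt
      have h1le : (1:ℝ≥0∞) ≤ ENNReal.ofReal t := ENNReal.one_le_ofReal.2 hlt
      have hMf0 : Mf t = 0 := by
        refine measure_mono_null (fun x hx => ?_) (meas_essSup_lt (f := f))
        simp only [mem_setOf_eq] at hx ⊢
        rw [hfsup]
        exact lt_of_le_of_lt h1le hx
      have hMg0 : Mg t = 0 := by
        refine measure_mono_null (fun x hx => ?_) (meas_essSup_lt (f := g))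
        simp only [mem_setOf_eq] at hx ⊢
        rw [hgsup]
        exact lt_of_le_of_lt h1le hx
      simp [hMf0, hMg0]
  calc ENNReal.ofReal (1-θ) * (∫⁻ t in Ioi (0:ℝ), Mf t)
        + ENNReal.ofReal θ * ∫⁻ t in Ioi (0:ℝ), Mg t
      = ∫⁻ t in Ioi (0:ℝ), (ENNReal.ofReal (1-θ) * Mf t + ENNReal.ofReal θ * Mg t) := by
        rw [lintegral_add_left (hMf_meas.const_mul _), lintegral_const_mul _ hMf_meas,
          lintegral_const_mul _ hMg_meas]
    _ ≤ ∫⁻ t in Ioi (0:ℝ), Mh t := setLIntegral_mono' measurableSet_Ioi key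

lemma pl_dim1_aux {θ : ℝ} (hθ0 : 0 < θ) (hθ1 : θ < 1) {f g h : ℝ → ℝ≥0∞}
    (hf : Measurable f) (hg : Measurable g) (hh : Measurable h)
    (hFtop : essSup f volume ≠ ⊤) (hGtop : essSup g volume ≠ ⊤)
    (hyp : ∀ x y, f x ^ (1-θ) * g y ^ θ ≤ h ((1-θ) * x + θ * y)) :
    (∫⁻ x, f x) ^ (1-θ) * (∫⁻ x, g x) ^ θ ≤ ∫⁻ x, h x := by
  have h1θ : (0:ℝ) < 1 - θ := by linarith
  by_cases hf0 : ∫⁻ x, f x = 0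
  · rw [hf0, ENNReal.zero_rpow_of_pos h1θ, zero_mul]; exact zero_le
  by_cases hg0 : ∫⁻ x, g x = 0
  · rw [hg0, ENNReal.zero_rpow_of_pos hθ0, mul_zero]; exact zero_le
  set F := essSup f volume with hF_def
  set G := essSup g volume with hG_def
  have hF0 : F ≠ 0 := by
    intro h0
    exact hf0 (lintegral_eq_zero_iff hf |>.2 (ENNReal.essSup_eq_zero_iff.1 h0))
  have hG0 : G ≠ 0 := by
    intro h0
    exact hg0 (lintegral_eq_zero_iff hg |>.2 (ENNReal.essSup_eq_zero_iff.1 h0))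
  have hrne : ∀ (X : ℝ≥0∞) (p : ℝ), X ≠ 0 → 0 < p → X ^ p ≠ 0 := by
    intro X p hX hp h0
    rcases ENNReal.rpow_eq_zero_iff.1 h0 with ⟨h1, _⟩ | ⟨_, h2⟩
    · exact hX h1
    · linarith
  set C := F ^ (1-θ) * G ^ θ with hC_def
  have hC0 : C ≠ 0 := mul_ne_zero (hrne F _ hF0 h1θ) (hrne G _ hG0 hθ0)
  have hCtop : C ≠ ⊤ := by
    exact ENNReal.mul_ne_top (ENNReal.rpow_lt_top_of_nonneg h1θ.le hFtop).ne
      (ENNReal.rpow_lt_top_of_nonneg hθ0.le hGtop).ne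
  -- normalized truncated functions
  set f' : ℝ → ℝ≥0∞ := fun x => min (f x * F⁻¹) 1 with hf'_def
  set g' : ℝ → ℝ≥0∞ := fun x => min (g x * G⁻¹) 1 with hg'_def
  set h' : ℝ → ℝ≥0∞ := fun x => min (h x * C⁻¹) 1 with hh'_def
  have hf'm : Measurable f' := (hf.mul_const _).min measurable_const
  have hg'm : Measurable g' := (hg.mul_const _).min measurable_const
  have hh'm : Measurable h' := (hh.mul_const _).min measurable_const
  have hf'le : ∀ x, f' x ≤ 1 := fun x => min_le_right _ _
  have hg'le : ∀ x, g' x ≤ 1 := fun x => min_le_right _ _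
  have hh'le : ∀ x, h' x ≤ 1 := fun x => min_le_right _ _
  -- a.e. equalities
  have hFinv_top : F⁻¹ ≠ ⊤ := ENNReal.inv_ne_top.2 hF0
  have hGinv_top : G⁻¹ ≠ ⊤ := ENNReal.inv_ne_top.2 hG0
  have hfae : f' =ᶠ[ae volume] fun x => f x * F⁻¹ := by
    filter_upwards [ENNReal.ae_le_essSup f] with x hx
    have : f x * F⁻¹ ≤ 1 := by
      rw [← ENNReal.mul_inv_cancel hF0 hFtop]
      exact mul_le_mul_left hx F⁻¹
    simp [hf'_def, min_eq_left this]
  have hgae : g' =ᶠ[ae volume] fun x => g x * G⁻¹ := by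
    filter_upwards [ENNReal.ae_le_essSup g] with x hx
    have : g x * G⁻¹ ≤ 1 := by
      rw [← ENNReal.mul_inv_cancel hG0 hGtop]
      exact mul_le_mul_left hx G⁻¹
    simp [hg'_def, min_eq_left this]
  have hf'sup : essSup f' volume = 1 := by
    have e0 : (fun x => f x * F⁻¹) = fun x => F⁻¹ * f x := by
      funext x; rw [mul_comm]
    rw [essSup_congr_ae hfae, e0, ENNReal.essSup_const_mul, ← hF_def,
      ENNReal.inv_mul_cancel hF0 hFtop]
  have hg'sup : essSup g' volume = 1 := by
    have e0 : (fun x => g x * G⁻¹) = fun x => G⁻¹ * g x := by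
      funext x; rw [mul_comm]
    rw [essSup_congr_ae hgae, e0, ENNReal.essSup_const_mul, ← hG_def,
      ENNReal.inv_mul_cancel hG0 hGtop]
  -- hypothesis transfer
  have hyp' : ∀ x y, f' x ^ (1-θ) * g' y ^ θ ≤ h' ((1-θ) * x + θ * y) := by
    intro x y
    have e1 : (f x * F⁻¹) ^ (1-θ) * (g y * G⁻¹) ^ θ = f x ^ (1-θ) * g y ^ θ * C⁻¹ := by
      rw [ENNReal.mul_rpow_of_nonneg _ _ h1θ.le, ENNReal.mul_rpow_of_nonneg _ _ hθ0.le,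
        ENNReal.inv_rpow, ENNReal.inv_rpow, hC_def, ENNReal.mul_inv (Or.inl (hrne F _ hF0 h1θ))
          (Or.inl (ENNReal.rpow_lt_top_of_nonneg h1θ.le hFtop).ne)]
      ring
    have step : f' x ^ (1-θ) * g' y ^ θ ≤ h ((1-θ) * x + θ * y) * C⁻¹ := by
      calc f' x ^ (1-θ) * g' y ^ θ
          ≤ (f x * F⁻¹) ^ (1-θ) * (g y * G⁻¹) ^ θ := by
            gcongr <;> [exact min_le_left _ _; exact min_le_left _ _]
        _ = f x ^ (1-θ) * g y ^ θ * C⁻¹ := e1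
        _ ≤ h ((1-θ) * x + θ * y) * C⁻¹ := mul_le_mul_left (hyp x y) _
    refine le_min step ?_
    calc f' x ^ (1-θ) * g' y ^ θ ≤ 1 ^ (1-θ) * 1 ^ θ := by
          gcongr <;> [exact hf'le x; exact hg'le y]
      _ = 1 := by simp
  have core := pl_dim1_core hθ0 hθ1 hf'm hg'm hh'm hf'le hg'le hh'le hf'sup hg'sup hyp'
  -- translate integrals
  have hif : ∫⁻ x, f' x = (∫⁻ x, f x) * F⁻¹ := by
    rw [lintegral_congr_ae hfae, lintegral_mul_const' _ _ hFinv_top]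
  have hig : ∫⁻ x, g' x = (∫⁻ x, g x) * G⁻¹ := by
    rw [lintegral_congr_ae hgae, lintegral_mul_const' _ _ hGinv_top]
  have hih : ∫⁻ x, h' x ≤ (∫⁻ x, h x) * C⁻¹ := by
    calc ∫⁻ x, h' x ≤ ∫⁻ x, h x * C⁻¹ := lintegral_mono fun x => min_le_left _ _
      _ = (∫⁻ x, h x) * C⁻¹ := lintegral_mul_const' _ _ (ENNReal.inv_ne_top.2 hC0)
  rw [hif, hig] at core
  -- AM-GM and conclude
  have amgm := ennreal_am_gm hθ0 hθ1 ((∫⁻ x, f x) * F⁻¹) ((∫⁻ x, g x) * G⁻¹)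
  have main : ((∫⁻ x, f x) * F⁻¹) ^ (1-θ) * ((∫⁻ x, g x) * G⁻¹) ^ θ
      ≤ (∫⁻ x, h x) * C⁻¹ := le_trans amgm (le_trans core hih)
  have expand : ((∫⁻ x, f x) * F⁻¹) ^ (1-θ) * ((∫⁻ x, g x) * G⁻¹) ^ θ
      = (∫⁻ x, f x) ^ (1-θ) * (∫⁻ x, g x) ^ θ * C⁻¹ := by
    rw [ENNReal.mul_rpow_of_nonneg _ _ h1θ.le, ENNReal.mul_rpow_of_nonneg _ _ hθ0.le,
      ENNReal.inv_rpow, ENNReal.inv_rpow, hC_def, ENNReal.mul_inv (Or.inl (hrne F _ hF0 h1θ))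
        (Or.inl (ENNReal.rpow_lt_top_of_nonneg h1θ.le hFtop).ne)]
    ring
  rw [expand] at main
  exact (ENNReal.mul_le_mul_iff_left (ENNReal.inv_ne_zero.2 hCtop)
    (ENNReal.inv_ne_top.2 hC0)).1 main

lemma pl_dim1 {θ : ℝ} (hθ0 : 0 < θ) (hθ1 : θ < 1) {f g h : ℝ → ℝ≥0∞}
    (hf : Measurable f) (hg : Measurable g) (hh : Measurable h)
    (hyp : ∀ x y, f x ^ (1-θ) * g y ^ θ ≤ h ((1-θ) * x + θ * y)) :
    (∫⁻ x, f x) ^ (1-θ) * (∫⁻ x, g x) ^ θ ≤ ∫⁻ x, h x := by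
  have h1θ : (0:ℝ) < 1 - θ := by linarith
  set fN : ℕ → ℝ → ℝ≥0∞ := fun N x => min (f x) N with hfN_def
  set gN : ℕ → ℝ → ℝ≥0∞ := fun N x => min (g x) N with hgN_def
  have hfNm : ∀ N, Measurable (fN N) := fun N => hf.min measurable_const
  have hgNm : ∀ N, Measurable (gN N) := fun N => hg.min measurable_const
  have hbound : ∀ N : ℕ, (∫⁻ x, fN N x) ^ (1-θ) * (∫⁻ x, gN N x) ^ θ ≤ ∫⁻ x, h x := by
    intro N
    refine pl_dim1_aux hθ0 hθ1 (hfNm N) (hgNm N) hh ?_ ?_ ?_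
    · refine ne_top_of_le_ne_top (by simp : ((N:ℝ≥0∞)) ≠ ⊤) ?_
      exact essSup_le_of_ae_le _ (Eventually.of_forall fun x => min_le_right _ _)
    · refine ne_top_of_le_ne_top (by simp : ((N:ℝ≥0∞)) ≠ ⊤) ?_
      exact essSup_le_of_ae_le _ (Eventually.of_forall fun x => min_le_right _ _)
    · intro x y
      calc fN N x ^ (1-θ) * gN N y ^ θ ≤ f x ^ (1-θ) * g y ^ θ := by
            gcongr <;> [exact min_le_left _ _; exact min_le_left _ _]
        _ ≤ h ((1-θ) * x + θ * y) := hyp x y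
  -- monotone convergence
  have hmono_f : Monotone fun N : ℕ => ∫⁻ x, fN N x := by
    intro N M hNM
    exact lintegral_mono fun x => min_le_min le_rfl (by exact_mod_cast Nat.cast_le.2 hNM)
  have hmono_g : Monotone fun N : ℕ => ∫⁻ x, gN N x := by
    intro N M hNM
    exact lintegral_mono fun x => min_le_min le_rfl (by exact_mod_cast Nat.cast_le.2 hNM)
  have hsup_pt : ∀ (u : ℝ → ℝ≥0∞) (x : ℝ), (⨆ N : ℕ, min (u x) N) = u x := by
    intro u x
    apply le_antisymm
    · exact iSup_le fun N => min_le_left _ _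
    · rcases eq_or_ne (u x) ⊤ with htop | hne
      · have e : (⨆ N : ℕ, min (u x) (N:ℝ≥0∞)) = ⨆ N : ℕ, (N:ℝ≥0∞) :=
          iSup_congr fun N => by rw [htop]; exact min_eq_right le_top
        rw [e, ENNReal.iSup_natCast, htop]
      · obtain ⟨N, hN⟩ := ENNReal.exists_nat_gt hne
        exact le_iSup_of_le N (min_eq_left hN.le).ge
  have hsup_f : (⨆ N : ℕ, ∫⁻ x, fN N x) = ∫⁻ x, f x := by
    rw [← lintegral_iSup hfNm (fun N M hNM => fun x => min_le_min le_rfl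
      (by exact_mod_cast Nat.cast_le.2 hNM))]
    exact lintegral_congr fun x => hsup_pt f x
  have hsup_g : (⨆ N : ℕ, ∫⁻ x, gN N x) = ∫⁻ x, g x := by
    rw [← lintegral_iSup hgNm (fun N M hNM => fun x => min_le_min le_rfl
      (by exact_mod_cast Nat.cast_le.2 hNM))]
    exact lintegral_congr fun x => hsup_pt g x
  -- pass to the limit
  by_cases hf0 : ∫⁻ x, f x = 0
  · rw [hf0, ENNReal.zero_rpow_of_pos h1θ, zero_mul]; exact zero_le
  by_cases hg0 : ∫⁻ x, g x = 0
  · rw [hg0, ENNReal.zero_rpow_of_pos hθ0, mul_zero]; exact zero_le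
  have tf : Tendsto (fun N : ℕ => ∫⁻ x, fN N x) atTop (nhds (∫⁻ x, f x)) := by
    rw [← hsup_f]; exact tendsto_atTop_iSup hmono_f
  have tg : Tendsto (fun N : ℕ => ∫⁻ x, gN N x) atTop (nhds (∫⁻ x, g x)) := by
    rw [← hsup_g]; exact tendsto_atTop_iSup hmono_g
  have trf : Tendsto (fun N : ℕ => (∫⁻ x, fN N x) ^ (1-θ)) atTop
      (nhds ((∫⁻ x, f x) ^ (1-θ))) :=
    (ENNReal.continuous_rpow_const.tendsto _).comp tf
  have trg : Tendsto (fun N : ℕ => (∫⁻ x, gN N x) ^ θ) atTop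
      (nhds ((∫⁻ x, g x) ^ θ)) :=
    (ENNReal.continuous_rpow_const.tendsto _).comp tg
  have hfr0 : (∫⁻ x, f x) ^ (1-θ) ≠ 0 := by
    intro h0
    rcases ENNReal.rpow_eq_zero_iff.1 h0 with ⟨h1, _⟩ | ⟨_, h2⟩
    · exact hf0 h1
    · linarith
  have hgr0 : (∫⁻ x, g x) ^ θ ≠ 0 := by
    intro h0
    rcases ENNReal.rpow_eq_zero_iff.1 h0 with ⟨h1, _⟩ | ⟨_, h2⟩
    · exact hg0 h1
    · linarith
  have tmul : Tendsto (fun N : ℕ => (∫⁻ x, fN N x) ^ (1-θ) * (∫⁻ x, gN N x) ^ θ) atTop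
      (nhds ((∫⁻ x, f x) ^ (1-θ) * (∫⁻ x, g x) ^ θ)) :=
    ENNReal.Tendsto.mul trf (Or.inl hfr0) trg (Or.inl hgr0)
  exact le_of_tendsto tmul (Eventually.of_forall hbound)

lemma measurable_cons {n : ℕ} :
    Measurable (fun p : ℝ × (Fin n → ℝ) => (Fin.cons p.1 p.2 : Fin (n+1) → ℝ)) := by
  refine measurable_pi_iff.2 fun j => ?_
  induction j using Fin.cases with
  | zero => simpa using measurable_fst
  | succ k => simp; exact (measurable_pi_apply k).comp measurable_snd

lemma cons_linear {n : ℕ} (θ : ℝ) (x y : ℝ) (p q : Fin n → ℝ) :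
    (Fin.cons ((1-θ) * x + θ * y) ((1-θ) • p + θ • q) : Fin (n+1) → ℝ)
      = (1-θ) • (Fin.cons x p : Fin (n+1) → ℝ) + θ • (Fin.cons y q : Fin (n+1) → ℝ) := by
  funext j
  induction j using Fin.cases with
  | zero => simp [smul_eq_mul]
  | succ k => simp [smul_eq_mul]

lemma lintegral_cons {n : ℕ} (f : (Fin (n+1) → ℝ) → ℝ≥0∞) (hf : Measurable f) :
    ∫⁻ z, f z = ∫⁻ p : Fin n → ℝ, ∫⁻ x : ℝ, f (Fin.cons x p) := by
  have hmp := measurePreserving_piFinSuccAbove (fun _ : Fin (n+1) => (volume : Measure ℝ)) 0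
  have h0 : ∫⁻ z, f z = ∫⁻ z : Fin (n+1) → ℝ, f z ∂(Measure.pi fun _ => volume) := by
    rw [volume_pi]
  have hmps := hmp.symm (MeasurableEquiv.piFinSuccAbove (fun _ : Fin (n+1) => ℝ) 0)
  rw [h0, ← hmps.lintegral_comp hf]
  have h1 : ∀ w : ℝ × (Fin n → ℝ),
      (MeasurableEquiv.piFinSuccAbove (fun _ : Fin (n+1) => ℝ) 0).symm w
        = Fin.cons w.1 w.2 := by
    intro w
    simp [MeasurableEquiv.piFinSuccAbove_symm_apply, Fin.insertNthEquiv,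
      Fin.insertNth_zero']
  calc ∫⁻ w, f ((MeasurableEquiv.piFinSuccAbove (fun _ : Fin (n+1) => ℝ) 0).symm w)
        ∂((volume : Measure ℝ).prod (Measure.pi fun _ : Fin n => volume))
      = ∫⁻ w, f (Fin.cons w.1 w.2)
        ∂((volume : Measure ℝ).prod (Measure.pi fun _ : Fin n => volume)) := by
        exact lintegral_congr fun w => by rw [h1]
    _ = ∫⁻ p : Fin n → ℝ, ∫⁻ x : ℝ, f (Fin.cons x p)
        ∂volume ∂(Measure.pi fun _ : Fin n => volume) := by
        have : Measurable fun w : ℝ × (Fin n → ℝ) => f (Fin.cons w.1 w.2) :=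
          hf.comp measurable_cons
        exact lintegral_prod_symm _ this.aemeasurable
    _ = ∫⁻ p : Fin n → ℝ, ∫⁻ x : ℝ, f (Fin.cons x p) := by rw [← volume_pi]

theorem prekopa_leindler {θ : ℝ} (hθ0 : 0 < θ) (hθ1 : θ < 1) :
    ∀ {n : ℕ} (f g h : (Fin n → ℝ) → ℝ≥0∞), Measurable f → Measurable g → Measurable h →
    (∀ x y, f x ^ (1-θ) * g y ^ θ ≤ h ((1-θ) • x + θ • y)) →
    (∫⁻ x, f x) ^ (1-θ) * (∫⁻ x, g x) ^ θ ≤ ∫⁻ x, h x := by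
  intro n
  induction n with
  | zero =>
      intro f g h hf hg hh hyp
      rw [lintegral_unique f, lintegral_unique g, lintegral_unique h]
      have huniv : volume (univ : Set (Fin 0 → ℝ)) = 1 := by
        rw [volume_pi, Measure.pi_univ]
        simp
      rw [huniv, mul_one, mul_one, mul_one]
      have key := hyp default default
      refine (le_of_eq ?_).trans (key.trans (le_of_eq ?_))
      · exact congrArg₂ (fun a b => f a ^ (1-θ) * g b ^ θ)
          (Subsingleton.elim _ _) (Subsingleton.elim _ _)
      · exact congrArg h (Subsingleton.elim _ _)
  | succ n ih =>
      intro f g h hf hg hh hyp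
      set F : (Fin n → ℝ) → ℝ≥0∞ := fun p => ∫⁻ x : ℝ, f (Fin.cons x p) with hF_def
      set G : (Fin n → ℝ) → ℝ≥0∞ := fun p => ∫⁻ x : ℝ, g (Fin.cons x p) with hG_def
      set H : (Fin n → ℝ) → ℝ≥0∞ := fun p => ∫⁻ x : ℝ, h (Fin.cons x p) with hH_def
      have hFm : Measurable F :=
        Measurable.lintegral_prod_left (f := fun x p => f (Fin.cons x p))
          (hf.comp measurable_cons)
      have hGm : Measurable G :=
        Measurable.lintegral_prod_left (f := fun x p => g (Fin.cons x p))
          (hg.comp measurable_cons)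
      have hHm : Measurable H :=
        Measurable.lintegral_prod_left (f := fun x p => h (Fin.cons x p))
          (hh.comp measurable_cons)
      have hyp' : ∀ p q, F p ^ (1-θ) * G q ^ θ ≤ H ((1-θ) • p + θ • q) := by
        intro p q
        refine pl_dim1 hθ0 hθ1 (f := fun x => f (Fin.cons x p))
          (g := fun y => g (Fin.cons y q))
          (h := fun z => h (Fin.cons z ((1-θ) • p + θ • q)))
          ((hf.comp measurable_cons).comp (measurable_id.prodMk measurable_const))
          ((hg.comp measurable_cons).comp (measurable_id.prodMk measurable_const))
          ((hh.comp measurable_cons).comp (measurable_id.prodMk measurable_const)) ?_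
        intro x y
        have := hyp (Fin.cons x p) (Fin.cons y q)
        rwa [← cons_linear] at this
      calc (∫⁻ x, f x) ^ (1-θ) * (∫⁻ x, g x) ^ θ
          = (∫⁻ p, F p) ^ (1-θ) * (∫⁻ p, G p) ^ θ := by
            rw [lintegral_cons f hf, lintegral_cons g hg]
        _ ≤ ∫⁻ p, H p := ih F G H hFm hGm hHm hyp'
        _ = ∫⁻ z, h z := (lintegral_cons h hh).symm

lemma bm_mult {n : ℕ} {θ : ℝ} (hθ0 : 0 < θ) (hθ1 : θ < 1) {A B S : Set (Fin n → ℝ)}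
    (hA : MeasurableSet A) (hB : MeasurableSet B) (hS : MeasurableSet S)
    (hsub : (1-θ) • A + θ • B ⊆ S) :
    volume A ^ (1-θ) * volume B ^ θ ≤ volume S := by
  have h1θ : (0:ℝ) < 1 - θ := by linarith
  have key := prekopa_leindler hθ0 hθ1
    (A.indicator (1 : (Fin n → ℝ) → ℝ≥0∞)) (B.indicator 1) (S.indicator 1)
    (measurable_const.indicator hA) (measurable_const.indicator hB)
    (measurable_const.indicator hS) ?_
  · rwa [lintegral_indicator_one hA, lintegral_indicator_one hB,
      lintegral_indicator_one hS] at key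
  · intro x y
    by_cases hx : x ∈ A
    · by_cases hy : y ∈ B
      · have hmem : (1-θ) • x + θ • y ∈ S :=
          hsub (Set.add_mem_add (smul_mem_smul_set hx) (smul_mem_smul_set hy))
        rw [indicator_of_mem hx, indicator_of_mem hy, indicator_of_mem hmem]
        simp
      · rw [indicator_of_notMem hy]
        rw [ENNReal.zero_rpow_of_pos hθ0, mul_zero]
        exact zero_le
    · rw [indicator_of_notMem hx]
      rw [ENNReal.zero_rpow_of_pos h1θ, zero_mul]
      exact zero_le



-- Brunn–Minkowski, additive form
lemma brunn_minkowski {n : ℕ} (hn : 0 < n) {Δ₁ Δ₂ : Set (Fin n → ℝ)}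
    (h₁c : IsCompact Δ₁) (h₂c : IsCompact Δ₂)
    (h₁ne : Δ₁.Nonempty) (h₂ne : Δ₂.Nonempty) :
    (volume Δ₁).toReal ^ ((1 : ℝ) / n) + (volume Δ₂).toReal ^ ((1 : ℝ) / n)
      ≤ (volume (Δ₁ + Δ₂)).toReal ^ ((1 : ℝ) / n) := by
  have hnR : (0:ℝ) < n := by exact_mod_cast hn
  have hn0 : (n:ℝ) ≠ 0 := ne_of_gt hnR
  set a := (volume Δ₁).toReal with ha_def
  set b := (volume Δ₂).toReal with hb_def
  have ha0 : 0 ≤ a := ENNReal.toReal_nonneg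
  have hb0 : 0 ≤ b := ENNReal.toReal_nonneg
  have hsumc : IsCompact (Δ₁ + Δ₂) := h₁c.add h₂c
  have hfin : volume (Δ₁ + Δ₂) ≠ ⊤ := hsumc.measure_lt_top.ne
  have htrans₁ : b ≤ (volume (Δ₁ + Δ₂)).toReal := by
    obtain ⟨x₀, hx₀⟩ := h₁ne
    have hsub : x₀ +ᵥ Δ₂ ⊆ Δ₁ + Δ₂ := by
      rintro _ ⟨y, hy, rfl⟩
      exact ⟨x₀, hx₀, y, hy, rfl⟩
    have h' : volume (x₀ +ᵥ Δ₂) ≤ volume (Δ₁ + Δ₂) := measure_mono hsub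
    rw [measure_vadd] at h'
    exact ENNReal.toReal_mono hfin h'
  have htrans₂ : a ≤ (volume (Δ₁ + Δ₂)).toReal := by
    obtain ⟨y₀, hy₀⟩ := h₂ne
    have hsub : y₀ +ᵥ Δ₁ ⊆ Δ₁ + Δ₂ := by
      rintro _ ⟨x, hx, rfl⟩
      exact ⟨x, hx, y₀, hy₀, by simp [vadd_eq_add]; ring⟩
    have h' : volume (y₀ +ᵥ Δ₁) ≤ volume (Δ₁ + Δ₂) := measure_mono hsub
    rw [measure_vadd] at h'
    exact ENNReal.toReal_mono hfin h'
  rcases eq_or_lt_of_le ha0 with ha | ha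
  · rw [← ha, Real.zero_rpow (one_div_ne_zero hn0), zero_add]
    exact Real.rpow_le_rpow hb0 htrans₁ (by positivity)
  rcases eq_or_lt_of_le hb0 with hb | hb
  · rw [← hb, Real.zero_rpow (one_div_ne_zero hn0), add_zero]
    exact Real.rpow_le_rpow ha0 htrans₂ (by positivity)
  -- main case
  have hroot : ∀ {c : ℝ}, 0 < c → (c ^ ((1:ℝ)/n)) ^ (n:ℕ) = c := by
    intro c hc
    rw [← Real.rpow_natCast (c ^ ((1:ℝ)/n)) n, ← Real.rpow_mul hc.le]
    rw [one_div_mul_cancel hn0, Real.rpow_one]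
  set s := a ^ ((1:ℝ)/n) + b ^ ((1:ℝ)/n) with hs_def
  have hs : 0 < s := by positivity
  set lam := b ^ ((1:ℝ)/n) / s with hlam_def
  have hbpow : 0 < b ^ ((1:ℝ)/n) := Real.rpow_pos_of_pos hb _
  have hapow : 0 < a ^ ((1:ℝ)/n) := Real.rpow_pos_of_pos ha _
  have hlam0 : 0 < lam := div_pos hbpow hs
  have hlam1 : lam < 1 := (div_lt_one hs).2 (by rw [hs_def]; linarith)
  have h1lam : 1 - lam = a ^ ((1:ℝ)/n) / s := by
    rw [hlam_def, hs_def]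
    field_simp
    ring
  have h1lam0 : 0 < 1 - lam := by linarith
  set A := (1 - lam)⁻¹ • Δ₁ with hA_def
  set B := lam⁻¹ • Δ₂ with hB_def
  have hsub : (1-lam) • A + lam • B ⊆ Δ₁ + Δ₂ := by
    rw [hA_def, hB_def, smul_smul, smul_smul, mul_inv_cancel₀ (ne_of_gt h1lam0),
      mul_inv_cancel₀ (ne_of_gt hlam0), one_smul, one_smul]
  have hAm : MeasurableSet A := (h₁c.smul _).measurableSet
  have hBm : MeasurableSet B := (h₂c.smul _).measurableSet
  have bm := bm_mult hlam0 hlam1 hAm hBm hsumc.measurableSet hsub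
  -- compute volumes of A and B
  have hvol : ∀ (c : ℝ) (X : Set (Fin n → ℝ)), 0 < c →
      volume (c • X) = ENNReal.ofReal (c ^ n) * volume X := by
    intro c X hc
    rw [Measure.addHaar_smul]
    congr 2
    rw [Module.finrank_fin_fun]
    exact abs_of_pos (by positivity)
  have hvA : volume A = ENNReal.ofReal (((1-lam)⁻¹) ^ n) * volume Δ₁ :=
    hvol _ _ (by positivity)
  have hvB : volume B = ENNReal.ofReal ((lam⁻¹) ^ n) * volume Δ₂ :=
    hvol _ _ (by positivity)
  have hvA_fin : volume A ≠ ⊤ := by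
    rw [hvA]; exact ENNReal.mul_ne_top ENNReal.ofReal_ne_top h₁c.measure_lt_top.ne
  have hvB_fin : volume B ≠ ⊤ := by
    rw [hvB]; exact ENNReal.mul_ne_top ENNReal.ofReal_ne_top h₂c.measure_lt_top.ne
  -- convert to real
  have breal : (volume A).toReal ^ (1-lam) * (volume B).toReal ^ lam
      ≤ (volume (Δ₁ + Δ₂)).toReal := by
    have := ENNReal.toReal_mono hfin bm
    rwa [ENNReal.toReal_mul, ← ENNReal.toReal_rpow, ← ENNReal.toReal_rpow] at this
  have hvA_real : (volume A).toReal = ((1-lam)⁻¹) ^ n * a := by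
    rw [hvA, ENNReal.toReal_mul, ENNReal.toReal_ofReal (by positivity)]
  have hvB_real : (volume B).toReal = (lam⁻¹) ^ n * b := by
    rw [hvB, ENNReal.toReal_mul, ENNReal.toReal_ofReal (by positivity)]
  have e1 : ((1-lam)⁻¹) ^ n * a = s ^ (n:ℕ) := by
    rw [h1lam, inv_div, div_pow, hroot ha]
    field_simp
  have e2 : (lam⁻¹) ^ n * b = s ^ (n:ℕ) := by
    rw [hlam_def, inv_div, div_pow, hroot hb]
    field_simp
  rw [hvA_real, hvB_real, e1, e2] at breal
  have hsn : (0:ℝ) < s ^ (n:ℕ) := by positivity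
  have e3 : (s ^ (n:ℕ)) ^ (1-lam) * (s ^ (n:ℕ)) ^ lam = s ^ (n:ℕ) := by
    rw [← Real.rpow_add hsn]
    norm_num
  rw [e3] at breal
  calc s ≤ (s ^ (n:ℕ)) ^ ((1:ℝ)/n) := by
        rw [← Real.rpow_natCast s n, ← Real.rpow_mul hs.le, mul_one_div,
          div_self hn0, Real.rpow_one]
    _ ≤ (volume (Δ₁ + Δ₂)).toReal ^ ((1:ℝ)/n) :=
        Real.rpow_le_rpow hsn.le breal (by positivity)
end BrunnMinkowskiAux

open MeasureTheory Pointwise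

/-- Brunn–Minkowski for compact convex bodies in `ℝⁿ`, and the
resulting superadditivity `Vol(L₁+L₂)^{1/n} ≥ Vol(L₁)^{1/n} + Vol(L₂)^{1/n}` of
volumes of big line bundles, via Okounkov bodies: `Vol(Lᵢ) = n! · vol(Δᵢ)` and
`Δ₁ + Δ₂ ⊆ Δ₁₂ = Δ_v(L₁ + L₂)`. -/
theorem brunn_minkowski_and_volume_superadditivity {n : ℕ} (hn : 0 < n)
    (Δ₁ Δ₂ : Set (Fin n → ℝ))
    (h₁c : IsCompact Δ₁) (h₂c : IsCompact Δ₂)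
    (h₁conv : Convex ℝ Δ₁) (h₂conv : Convex ℝ Δ₂)
    (h₁ne : Δ₁.Nonempty) (h₂ne : Δ₂.Nonempty) :
    (volume (Δ₁ + Δ₂)).toReal ^ ((1 : ℝ) / n)
        ≥ (volume Δ₁).toReal ^ ((1 : ℝ) / n) + (volume Δ₂).toReal ^ ((1 : ℝ) / n) ∧
    ∀ Δ₁₂ : Set (Fin n → ℝ), IsCompact Δ₁₂ → Convex ℝ Δ₁₂ →
      Δ₁ + Δ₂ ⊆ Δ₁₂ →
      ∀ V₁ V₂ V₁₂ : ℝ,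
        V₁ = n.factorial * (volume Δ₁).toReal →
        V₂ = n.factorial * (volume Δ₂).toReal →
        V₁₂ = n.factorial * (volume Δ₁₂).toReal →
        V₁₂ ^ ((1 : ℝ) / n) ≥ V₁ ^ ((1 : ℝ) / n) + V₂ ^ ((1 : ℝ) / n) := by
  have hnR : (0:ℝ) < n := by exact_mod_cast hn
  have hn0 : (n:ℝ) ≠ 0 := ne_of_gt hnR
  have partA := brunn_minkowski hn h₁c h₂c h₁ne h₂ne
  refine ⟨partA, ?_⟩
  intro Δ₁₂ h12c _h12conv hsub12 V₁ V₂ V₁₂ hV₁ hV₂ hV₁₂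
  subst hV₁ hV₂ hV₁₂
  set a := (volume Δ₁).toReal with ha_def
  set b := (volume Δ₂).toReal with hb_def
  have ha0 : 0 ≤ a := ENNReal.toReal_nonneg
  have hb0 : 0 ≤ b := ENNReal.toReal_nonneg
  have hfact : (0:ℝ) ≤ (n.factorial : ℝ) := by positivity
  have hV : (volume (Δ₁ + Δ₂)).toReal ≤ (volume Δ₁₂).toReal :=
    ENNReal.toReal_mono h12c.measure_lt_top.ne (measure_mono hsub12)
  have hVnn : (0:ℝ) ≤ (volume (Δ₁ + Δ₂)).toReal := ENNReal.toReal_nonneg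
  calc (↑n.factorial * a) ^ ((1:ℝ)/n) + (↑n.factorial * b) ^ ((1:ℝ)/n)
      = (n.factorial : ℝ) ^ ((1:ℝ)/n) * (a ^ ((1:ℝ)/n) + b ^ ((1:ℝ)/n)) := by
        rw [Real.mul_rpow hfact ha0, Real.mul_rpow hfact hb0, mul_add]
    _ ≤ (n.factorial : ℝ) ^ ((1:ℝ)/n) * (volume (Δ₁ + Δ₂)).toReal ^ ((1:ℝ)/n) := by
        apply mul_le_mul_of_nonneg_left partA (by positivity)
    _ ≤ (n.factorial : ℝ) ^ ((1:ℝ)/n) * (volume Δ₁₂).toReal ^ ((1:ℝ)/n) := by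
        apply mul_le_mul_of_nonneg_left
          (Real.rpow_le_rpow hVnn hV (by positivity)) (by positivity)
    _ = (↑n.factorial * (volume Δ₁₂).toReal) ^ ((1:ℝ)/n) := by
        rw [Real.mul_rpow hfact ENNReal.toReal_nonneg]
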